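/- For every real number λ ∉ ℤ, the left-symmetric structure ∆_{ω_λ} on T*g induced by the symplectic structure ω_λ coincides with the left-symmetric structure ∆_{(α,β)}, where α = (λ−1)/λ and β = −(λ−n+2)/(λ−n+1). -/

import Mathlib

namespace Paper

open Finset

/-- Index type for the basis {z, e_1,…,e_n, f_1,…,f_n, t} of the cotangent Lie algebra
`T*g` of `g = ℝ ⋉_{J_n(0)} ℝ^n`.  The constructor `Bas.e i` (with `i : Fin n`)
represents the basis vector `e_{i+1}` (math indexing `1,…,n`), similarly `Bas.f i`. -/
inductive Bas (n : ℕ) : Type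
  | z : Bas n
  | t : Bas n
  | e : Fin n → Bas n
  | f : Fin n → Bas n
  deriving DecidableEq

/-- The underlying vector space of `T*g`, as coordinate functions on the basis. -/
abbrev V (n : ℕ) : Type := Bas n → ℝ

/-- The basis vectors of `T*g`. -/
noncomputable def bas (n : ℕ) (b : Bas n) : V n := Pi.single b 1

/-- The Lie bracket of `T*g`: the bilinear extension of
`[t, e_{i+1}] = e_i`, `[t, f_{i+1}] = -f_i`, `[e_{i+1}, f_{n-i+1}] = z` for `i = 1,…,n-1`
(math indexing), all other brackets of basis vectors being zero. -/
noncomputable def bracket (n : ℕ) (x y : V n) : V n := fun b =>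
  match b with
  | Bas.z => ∑ i : Fin n, ∑ j : Fin n,
      (if (i : ℕ) + (j : ℕ) = n then
        x (Bas.e i) * y (Bas.f j) - x (Bas.f j) * y (Bas.e i) else 0)
  | Bas.t => 0
  | Bas.e k => if h : (k : ℕ) + 1 < n then
      x Bas.t * y (Bas.e ⟨(k : ℕ) + 1, h⟩) - x (Bas.e ⟨(k : ℕ) + 1, h⟩) * y Bas.t else 0
  | Bas.f k => if h : (k : ℕ) + 1 < n then
      -(x Bas.t * y (Bas.f ⟨(k : ℕ) + 1, h⟩)) + x (Bas.f ⟨(k : ℕ) + 1, h⟩) * y Bas.t else 0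

/-- `αseq α i = α_i = (i(α-1)+1)/((α-1)(i-1)+1)`. -/
noncomputable def αseq (α : ℝ) (i : ℕ) : ℝ :=
  ((i : ℝ) * (α - 1) + 1) / ((α - 1) * ((i : ℝ) - 1) + 1)

/-- `βseq β i = β_i = (i(β+1)-1)/(-(β+1)(i-1)+1)`. -/
noncomputable def βseq (β : ℝ) (i : ℕ) : ℝ :=
  ((i : ℝ) * (β + 1) - 1) / (-(β + 1) * ((i : ℝ) - 1) + 1)

/-- `γseq n α β i = γ_i = (α-1)((n-i)(β+1)-1)/(n(α-1)(β+1)-(α-1)+β+1)`. -/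
noncomputable def γseq (n : ℕ) (α β : ℝ) (i : ℕ) : ℝ :=
  ((α - 1) * (((n : ℝ) - (i : ℝ)) * (β + 1) - 1)) /
    ((n : ℝ) * (α - 1) * (β + 1) - (α - 1) + β + 1)

/-- The standing conditions on `α, β`:
`k(α-1)+1 ≠ 0` and `k(β+1)-1 ≠ 0` for all integers `k ≥ 1`, and
`n(α-1)(β+1) - α + β + 2 ≠ 0`. -/
def Cond (n : ℕ) (α β : ℝ) : Prop :=
  (∀ k : ℕ, 1 ≤ k → (k : ℝ) * (α - 1) + 1 ≠ 0) ∧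
  (∀ k : ℕ, 1 ≤ k → (k : ℝ) * (β + 1) - 1 ≠ 0) ∧
  (n : ℝ) * (α - 1) * (β + 1) - α + β + 2 ≠ 0

/-- The product `∆_{(α,β)}` on `T*g`: the bilinear extension of
`t ∆ e_{i+1} = α_i e_i`, `e_{i+1} ∆ t = (α_i - 1) e_i`, `t ∆ f_{i+1} = β_i f_i`,
`f_{i+1} ∆ t = (β_i + 1) f_i`, `e_{i+1} ∆ f_{n-i+1} = γ_i z`,
`f_{n-i+1} ∆ e_{i+1} = (γ_i - 1) z` for `i = 1,…,n-1` (math indexing),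
all other products of basis vectors being zero. -/
noncomputable def lsa (n : ℕ) (α β : ℝ) (x y : V n) : V n := fun b =>
  match b with
  | Bas.z => ∑ i : Fin n, ∑ j : Fin n,
      (if (i : ℕ) + (j : ℕ) = n then
        γseq n α β (i : ℕ) * (x (Bas.e i) * y (Bas.f j))
          + (γseq n α β (i : ℕ) - 1) * (x (Bas.f j) * y (Bas.e i))
      else 0)
  | Bas.t => 0
  | Bas.e k => if h : (k : ℕ) + 1 < n then
      αseq α ((k : ℕ) + 1) * (x Bas.t * y (Bas.e ⟨(k : ℕ) + 1, h⟩))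
        + (αseq α ((k : ℕ) + 1) - 1) * (x (Bas.e ⟨(k : ℕ) + 1, h⟩) * y Bas.t)
      else 0
  | Bas.f k => if h : (k : ℕ) + 1 < n then
      βseq β ((k : ℕ) + 1) * (x Bas.t * y (Bas.f ⟨(k : ℕ) + 1, h⟩))
        + (βseq β ((k : ℕ) + 1) + 1) * (x (Bas.f ⟨(k : ℕ) + 1, h⟩) * y Bas.t)
      else 0

/-- `D` is a left-symmetric structure on `T*g`: the associator is symmetric in the
first two arguments and `x∆y - y∆x = [x,y]`. -/
def IsLSA (n : ℕ) (D : V n → V n → V n) : Prop :=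
  (∀ x y z : V n, D x (D y z) - D (D x y) z = D y (D x z) - D (D y x) z) ∧
  (∀ x y : V n, D x y - D y x = bracket n x y)

/-- Completeness: every right translation `y ↦ y ∆ x` is nilpotent. -/
def IsComplete (n : ℕ) (D : V n → V n → V n) : Prop :=
  ∀ x : V n, ∃ m : ℕ, ∀ y : V n, (fun w => D w x)^[m] y = 0

/-- Bilinearity of a product. -/
def IsBilin (n : ℕ) (D : V n → V n → V n) : Prop :=
  (∀ (c : ℝ) (x x' y : V n), D (c • x + x') y = c • D x y + D x' y) ∧
  (∀ (c : ℝ) (x y y' : V n), D x (c • y + y') = c • D x y + D x y')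

/-- Two left-symmetric structures on `T*g` are isomorphic if some Lie algebra
automorphism of `T*g` intertwines the products. -/
def LSAIso (n : ℕ) (D D' : V n → V n → V n) : Prop :=
  ∃ φ : V n ≃ₗ[ℝ] V n,
    (∀ x y, φ (bracket n x y) = bracket n (φ x) (φ y)) ∧
    (∀ x y, φ (D x y) = D' (φ x) (φ y))

/-- The 2-form `ω_λ = t* ∧ z* + ∑ λ_i e_i* ∧ f_{n-i+1}*` with `λ_i = λ - i + 1`. -/
noncomputable def omegaForm (n : ℕ) (lam : ℝ) (x y : V n) : ℝ :=
  (x Bas.t * y Bas.z - x Bas.z * y Bas.t) +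
  ∑ i : Fin n, (lam - ((i : ℕ) : ℝ)) *
    (x (Bas.e i) * y (Bas.f ⟨n - 1 - (i : ℕ), by have := i.isLt; omega⟩)
      - x (Bas.f ⟨n - 1 - (i : ℕ), by have := i.isLt; omega⟩) * y (Bas.e i))

/-- Two symplectic forms on `T*g` are symplectomorphic up to homothety if some Lie
algebra automorphism pulls one back to a nonzero multiple of the other. -/
def SympIso (n : ℕ) (ω ω' : V n → V n → ℝ) : Prop :=
  ∃ φ : V n ≃ₗ[ℝ] V n,
    (∀ x y, φ (bracket n x y) = bracket n (φ x) (φ y)) ∧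
    ∃ c : ℝ, c ≠ 0 ∧ ∀ x y, ω' (φ x) (φ y) = c * ω x y

/-- `ω` is a symplectic structure on `T*g`. -/
def IsSymplectic (n : ℕ) (ω : V n → V n → ℝ) : Prop :=
  (∀ (c : ℝ) (x x' y : V n), ω (c • x + x') y = c * ω x y + ω x' y) ∧
  (∀ x y : V n, ω x y = - ω y x) ∧
  (∀ x : V n, (∀ y, ω x y = 0) → x = 0) ∧
  (∀ x y z : V n, ω x (bracket n y z) + ω y (bracket n z x) + ω z (bracket n x y) = 0)


section Helpers

variable {n : ℕ}

/-- e-coordinates as a function of ℕ. -/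
noncomputable def Ec (n : ℕ) (x : V n) (i : ℕ) : ℝ :=
  if h : i < n then x (Bas.e ⟨i, h⟩) else 0

/-- f-coordinates as a function of ℕ. -/
noncomputable def Fc (n : ℕ) (x : V n) (i : ℕ) : ℝ :=
  if h : i < n then x (Bas.f ⟨i, h⟩) else 0

lemma Ec_eq (x : V n) (i : Fin n) : Ec n x (i : ℕ) = x (Bas.e i) := by
  simp [Ec, i.isLt]

lemma Fc_eq (x : V n) (i : Fin n) : Fc n x (i : ℕ) = x (Bas.f i) := by
  simp [Fc, i.isLt]

lemma Ec_eq' (x : V n) {i : ℕ} (h : i < n) : Ec n x i = x (Bas.e ⟨i, h⟩) := dif_pos h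

lemma Fc_eq' (x : V n) {i : ℕ} (h : i < n) : Fc n x i = x (Bas.f ⟨i, h⟩) := dif_pos h

/-- Collapse the double sum over `i + j = n`. -/
lemma sum_pair (F : ∀ i : Fin n, Fin n → ℝ) :
    (∑ i : Fin n, ∑ j : Fin n, if (i : ℕ) + (j : ℕ) = n then F i j else 0)
      = ∑ i : Fin n, (if h : 1 ≤ (i : ℕ) then
          F i ⟨n - (i : ℕ), by omega⟩ else 0) := by
  refine Finset.sum_congr rfl fun i _ => ?_
  by_cases h : 1 ≤ (i : ℕ)
  · rw [dif_pos h]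
    rw [Finset.sum_eq_single (⟨n - (i : ℕ), by omega⟩ : Fin n)]
    · rw [if_pos (show (i : ℕ) + (n - (i : ℕ)) = n by omega)]
    · intro j _ hj
      rw [if_neg]
      intro hij
      exact hj (by apply Fin.ext; simp; omega)
    · simp
  · rw [dif_neg h]
    refine Finset.sum_eq_zero fun j _ => ?_
    rw [if_neg]
    have := j.isLt
    omega

end Helpers


section Omg
variable {n : ℕ} (lam : ℝ)

lemma omega_bas_t (v : V n) : omegaForm n lam v (bas n Bas.t) = -v Bas.z := by
  simp [omegaForm, bas, Pi.single_apply]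

lemma omega_bas_z (v : V n) : omegaForm n lam v (bas n Bas.z) = v Bas.t := by
  simp [omegaForm, bas, Pi.single_apply]

lemma omega_bas_f (v : V n) (j : Fin n) :
    omegaForm n lam v (bas n (Bas.f j)) =
      (lam - ((n - 1 - (j : ℕ) : ℕ) : ℝ)) * Ec n v (n - 1 - (j : ℕ)) := by
  have hjlt := j.isLt
  have hlt : n - 1 - (j : ℕ) < n := by omega
  have h2 : n - 1 - (n - 1 - (j : ℕ)) = (j : ℕ) := by omega
  simp only [omegaForm, bas, Pi.single_apply]
  rw [Finset.sum_eq_single (⟨n - 1 - (j : ℕ), hlt⟩ : Fin n)]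
  · simp only [Fin.val_mk, h2, Ec, hlt, dif_pos]
    have h3 : (Bas.f (⟨(j : ℕ), hjlt⟩ : Fin n) : Bas n) = Bas.f j := by
      simp
    rw [h3]
    simp
  · intro i _ hi
    have hilt := i.isLt
    have h1 : ¬ (Bas.f ⟨n - 1 - (i : ℕ), by omega⟩ : Bas n) = Bas.f j := by
      simp only [Bas.f.injEq, Fin.ext_iff, Fin.val_mk]
      intro h
      exact hi (by apply Fin.ext; simp only [Fin.val_mk]; omega)
    have h4 : ¬ (Bas.e i : Bas n) = Bas.f j := by simp
    simp [h1, h4]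
  · simp

lemma omega_bas_e (v : V n) (j : Fin n) :
    omegaForm n lam v (bas n (Bas.e j)) =
      -((lam - ((j : ℕ) : ℝ)) * Fc n v (n - 1 - (j : ℕ))) := by
  have hjlt := j.isLt
  have hlt : n - 1 - (j : ℕ) < n := by omega
  simp only [omegaForm, bas, Pi.single_apply]
  rw [Finset.sum_eq_single j]
  · have h4 : ¬ (Bas.f ⟨n - 1 - (j : ℕ), by omega⟩ : Bas n) = Bas.e j := by simp
    simp [h4, Fc, hlt]
  · intro i _ hi
    have hilt := i.isLt
    have h1 : ¬ (Bas.e i : Bas n) = Bas.e j := by simp; exact hi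
    have h4 : ¬ (Bas.f ⟨n - 1 - (i : ℕ), by omega⟩ : Bas n) = Bas.e j := by simp
    simp [h1, h4]
  · simp

end Omg


section Br
variable {n : ℕ}

lemma br_bast_z (x : V n) : bracket n x (bas n Bas.t) Bas.z = 0 := by
  simp [bracket, bas, Pi.single_apply]

lemma br_bast_e (x : V n) (k : Fin n) :
    bracket n x (bas n Bas.t) (Bas.e k) =
      if (k : ℕ) + 1 < n then -(Ec n x ((k : ℕ) + 1)) else 0 := by
  simp only [bracket, bas, Pi.single_apply]
  by_cases h : (k : ℕ) + 1 < n
  · rw [dif_pos h, if_pos h]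
    simp [Ec, h]
  · rw [dif_neg h, if_neg h]

lemma br_bast_f (x : V n) (k : Fin n) :
    bracket n x (bas n Bas.t) (Bas.f k) =
      if (k : ℕ) + 1 < n then Fc n x ((k : ℕ) + 1) else 0 := by
  simp only [bracket, bas, Pi.single_apply]
  by_cases h : (k : ℕ) + 1 < n
  · rw [dif_pos h, if_pos h]
    simp [Fc, h]
  · rw [dif_neg h, if_neg h]

lemma br_basz (x : V n) (b : Bas n) : bracket n x (bas n Bas.z) b = 0 := by
  cases b <;> simp [bracket, bas, Pi.single_apply]

lemma br_basf_z (x : V n) (j : Fin n) :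
    bracket n x (bas n (Bas.f j)) Bas.z =
      if 1 ≤ (j : ℕ) then Ec n x (n - (j : ℕ)) else 0 := by
  have hj := j.isLt
  show (∑ i : Fin n, ∑ j' : Fin n, if (i : ℕ) + (j' : ℕ) = n then
      x (Bas.e i) * bas n (Bas.f j) (Bas.f j') - x (Bas.f j') * bas n (Bas.f j) (Bas.e i)
    else 0) = _
  rw [sum_pair]
  by_cases h : 1 ≤ (j : ℕ)
  · rw [if_pos h]
    rw [Finset.sum_eq_single (⟨n - (j : ℕ), by omega⟩ : Fin n)]
    · rw [dif_pos (by simp only [Fin.val_mk]; omega)]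
      simp only [Fin.val_mk, bas, Pi.single_apply]
      have h1 : (Bas.f (⟨n - (n - (j : ℕ)), by omega⟩ : Fin n) : Bas n) = Bas.f j := by
        simp only [Bas.f.injEq, Fin.ext_iff, Fin.val_mk]; omega
      have h2 : ¬ (Bas.e (⟨n - (j : ℕ), by omega⟩ : Fin n) : Bas n) = Bas.f j := by simp
      rw [h1, Ec_eq' x (show n - (j : ℕ) < n by omega)]
      simp [h2]
    · intro i _ hi
      have hilt := i.isLt
      by_cases h1 : 1 ≤ (i : ℕ)
      · rw [dif_pos h1]
        have h3 : ¬ (Bas.f (⟨n - (i : ℕ), by omega⟩ : Fin n) : Bas n) = Bas.f j := by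
          simp only [Bas.f.injEq, Fin.ext_iff, Fin.val_mk]
          intro h'
          exact hi (by apply Fin.ext; simp only [Fin.val_mk]; omega)
        have h4 : ¬ (Bas.e i : Bas n) = Bas.f j := by simp
        simp [bas, Pi.single_apply, h3, h4]
      · rw [dif_neg h1]
    · simp
  · rw [if_neg h]
    refine Finset.sum_eq_zero fun i _ => ?_
    have hilt := i.isLt
    by_cases h1 : 1 ≤ (i : ℕ)
    · rw [dif_pos h1]
      have h3 : ¬ (Bas.f (⟨n - (i : ℕ), by omega⟩ : Fin n) : Bas n) = Bas.f j := by
        simp only [Bas.f.injEq, Fin.ext_iff, Fin.val_mk]; omega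
      have h4 : ¬ (Bas.e i : Bas n) = Bas.f j := by simp
      simp [bas, Pi.single_apply, h3, h4]
    · rw [dif_neg h1]

lemma br_basf_e (x : V n) (j k : Fin n) :
    bracket n x (bas n (Bas.f j)) (Bas.e k) = 0 := by
  simp [bracket, bas, Pi.single_apply]

lemma br_basf_f (x : V n) (j k : Fin n) :
    bracket n x (bas n (Bas.f j)) (Bas.f k) =
      if (k : ℕ) + 1 = (j : ℕ) then -(x Bas.t) else 0 := by
  simp only [bracket, bas, Pi.single_apply]
  by_cases h : (k : ℕ) + 1 = (j : ℕ)
  · have hlt : (k : ℕ) + 1 < n := by have := j.isLt; omega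
    rw [dif_pos hlt, if_pos h]
    have h1 : (Bas.f (⟨(k : ℕ) + 1, hlt⟩ : Fin n) : Bas n) = Bas.f j := by
      simp only [Bas.f.injEq, Fin.ext_iff, Fin.val_mk]; omega
    rw [h1]
    simp
  · rw [if_neg h]
    by_cases hlt : (k : ℕ) + 1 < n
    · rw [dif_pos hlt]
      have h1 : ¬ (Bas.f (⟨(k : ℕ) + 1, hlt⟩ : Fin n) : Bas n) = Bas.f j := by
        simp only [Bas.f.injEq, Fin.ext_iff, Fin.val_mk]; omega
      simp [h1]
    · rw [dif_neg hlt]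

lemma br_base_z (x : V n) (j : Fin n) :
    bracket n x (bas n (Bas.e j)) Bas.z =
      if 1 ≤ (j : ℕ) then -(Fc n x (n - (j : ℕ))) else 0 := by
  have hj := j.isLt
  show (∑ i : Fin n, ∑ j' : Fin n, if (i : ℕ) + (j' : ℕ) = n then
      x (Bas.e i) * bas n (Bas.e j) (Bas.f j') - x (Bas.f j') * bas n (Bas.e j) (Bas.e i)
    else 0) = _
  rw [sum_pair]
  by_cases h : 1 ≤ (j : ℕ)
  · rw [if_pos h]
    rw [Finset.sum_eq_single j]
    · rw [dif_pos h]
      have h2 : ¬ (Bas.f (⟨n - (j : ℕ), by omega⟩ : Fin n) : Bas n) = Bas.e j := by simp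
      rw [Fc_eq' x (show n - (j : ℕ) < n by omega)]
      simp [bas, Pi.single_apply, h2]
    · intro i _ hi
      have hilt := i.isLt
      by_cases h1 : 1 ≤ (i : ℕ)
      · rw [dif_pos h1]
        have h3 : ¬ (Bas.f (⟨n - (i : ℕ), by omega⟩ : Fin n) : Bas n) = Bas.e j := by simp
        have h4 : ¬ (Bas.e i : Bas n) = Bas.e j := by simp; exact hi
        simp [bas, Pi.single_apply, h3, h4]
      · rw [dif_neg h1]
    · simp
  · rw [if_neg h]
    refine Finset.sum_eq_zero fun i _ => ?_
    have hilt := i.isLt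
    by_cases h1 : 1 ≤ (i : ℕ)
    · rw [dif_pos h1]
      have h3 : ¬ (Bas.f (⟨n - (i : ℕ), by omega⟩ : Fin n) : Bas n) = Bas.e j := by simp
      have h4 : ¬ (Bas.e i : Bas n) = Bas.e j := by
        simp only [Bas.e.injEq]
        intro h'
        subst h'
        omega
      simp [bas, Pi.single_apply, h3, h4]
    · rw [dif_neg h1]

lemma br_base_e (x : V n) (j k : Fin n) :
    bracket n x (bas n (Bas.e j)) (Bas.e k) =
      if (k : ℕ) + 1 = (j : ℕ) then x Bas.t else 0 := by
  simp only [bracket, bas, Pi.single_apply]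
  by_cases h : (k : ℕ) + 1 = (j : ℕ)
  · have hlt : (k : ℕ) + 1 < n := by have := j.isLt; omega
    rw [dif_pos hlt, if_pos h]
    have h1 : (Bas.e (⟨(k : ℕ) + 1, hlt⟩ : Fin n) : Bas n) = Bas.e j := by
      simp only [Bas.e.injEq, Fin.ext_iff, Fin.val_mk]; omega
    rw [h1]
    simp
  · rw [if_neg h]
    by_cases hlt : (k : ℕ) + 1 < n
    · rw [dif_pos hlt]
      have h1 : ¬ (Bas.e (⟨(k : ℕ) + 1, hlt⟩ : Fin n) : Bas n) = Bas.e j := by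
        simp only [Bas.e.injEq, Fin.ext_iff, Fin.val_mk]; omega
      simp [h1]
    · rw [dif_neg hlt]

lemma br_base_f (x : V n) (j k : Fin n) :
    bracket n x (bas n (Bas.e j)) (Bas.f k) = 0 := by
  simp [bracket, bas, Pi.single_apply]

end Br


section OmgBr
variable {n : ℕ} (lam : ℝ)

lemma br_t (x w : V n) : bracket n x w Bas.t = 0 := rfl

lemma omega_br_basz (x y : V n) :
    omegaForm n lam y (bracket n x (bas n Bas.z)) = 0 := by
  simp [omegaForm, br_basz, br_t]

lemma omega_br_bast (x y : V n) :
    omegaForm n lam y (bracket n x (bas n Bas.t)) =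
      ∑ m : Fin n, (lam - ((m : ℕ) : ℝ)) *
        ((if 1 ≤ (m : ℕ) then Ec n y (m : ℕ) * Fc n x (n - (m : ℕ)) else 0) +
         (if (m : ℕ) + 1 < n then Fc n y (n - 1 - (m : ℕ)) * Ec n x ((m : ℕ) + 1) else 0)) := by
  simp only [omegaForm, br_bast_z, br_bast_e, br_bast_f, br_t]
  rw [mul_zero, zero_sub, mul_zero, neg_zero, zero_add]
  refine Finset.sum_congr rfl fun i _ => ?_
  have hi := i.isLt
  simp only [← Ec_eq, ← Fc_eq, Fin.val_mk]
  by_cases h1 : 1 ≤ (i : ℕ)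
  · rw [if_pos h1, if_pos (show n - 1 - (i : ℕ) + 1 < n by omega),
      show n - 1 - (i : ℕ) + 1 = n - (i : ℕ) from by omega]
    by_cases h2 : (i : ℕ) + 1 < n
    · rw [if_pos h2, if_pos h2]; ring
    · rw [if_neg h2, if_neg h2]; ring
  · rw [if_neg h1, if_neg (show ¬ (n - 1 - (i : ℕ) + 1 < n) by omega)]
    by_cases h2 : (i : ℕ) + 1 < n
    · rw [if_pos h2, if_pos h2]; ring
    · rw [if_neg h2, if_neg h2]; ring

lemma omega_br_basf (x y : V n) (j : Fin n) :
    omegaForm n lam y (bracket n x (bas n (Bas.f j))) =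
      if 1 ≤ (j : ℕ) then
        y Bas.t * Ec n x (n - (j : ℕ))
          - (lam - ((n - (j : ℕ) : ℕ) : ℝ)) * (Ec n y (n - (j : ℕ)) * x Bas.t)
      else 0 := by
  have hj := j.isLt
  simp only [omegaForm, br_basf_z, br_basf_e, br_basf_f, br_t, Fin.val_mk]
  rw [mul_zero, sub_zero]
  by_cases h : 1 ≤ (j : ℕ)
  · rw [if_pos h, if_pos h]
    rw [Finset.sum_eq_single (⟨n - (j : ℕ), by omega⟩ : Fin n)]
    · simp only [Fin.val_mk]
      rw [if_pos (show n - 1 - (n - (j : ℕ)) + 1 = (j : ℕ) by omega), ← Ec_eq y]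
      simp only [Fin.val_mk]
      ring
    · intro i _ hi
      have hilt := i.isLt
      rw [if_neg (show ¬ (n - 1 - (i : ℕ) + 1 = (j : ℕ)) from ?_)]
      · ring
      · intro h'
        exact hi (by apply Fin.ext; simp only [Fin.val_mk]; omega)
    · simp
  · rw [if_neg h, if_neg h]
    rw [Finset.sum_eq_zero fun i _ => ?_]
    · ring
    · have hilt := i.isLt
      rw [if_neg (show ¬ (n - 1 - (i : ℕ) + 1 = (j : ℕ)) by omega)]
      ring

lemma omega_br_base (x y : V n) (j : Fin n) :
    omegaForm n lam y (bracket n x (bas n (Bas.e j))) =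
      if 1 ≤ (j : ℕ) then
        -(y Bas.t * Fc n x (n - (j : ℕ)))
          - (lam - (((j : ℕ) - 1 : ℕ) : ℝ)) * (Fc n y (n - (j : ℕ)) * x Bas.t)
      else 0 := by
  have hj := j.isLt
  simp only [omegaForm, br_base_z, br_base_e, br_base_f, br_t, Fin.val_mk]
  rw [mul_zero, sub_zero]
  by_cases h : 1 ≤ (j : ℕ)
  · rw [if_pos h, if_pos h]
    rw [Finset.sum_eq_single (⟨(j : ℕ) - 1, by omega⟩ : Fin n)]
    · simp only [Fin.val_mk]
      rw [if_pos (show (j : ℕ) - 1 + 1 = (j : ℕ) by omega), ← Fc_eq y]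
      simp only [Fin.val_mk]
      rw [show n - 1 - ((j : ℕ) - 1) = n - (j : ℕ) from by omega]
      ring
    · intro i _ hi
      have hilt := i.isLt
      rw [if_neg (show ¬ ((i : ℕ) + 1 = (j : ℕ)) from ?_)]
      · ring
      · intro h'
        exact hi (by apply Fin.ext; simp only [Fin.val_mk]; omega)
    · simp
  · rw [if_neg h, if_neg h]
    rw [Finset.sum_eq_zero fun i _ => ?_]
    · ring
    · have hilt := i.isLt
      rw [if_neg (show ¬ ((i : ℕ) + 1 = (j : ℕ)) by omega)]
      ring

end OmgBr


section Eval
variable (lam : ℝ)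

lemma alpha_eval (h0 : lam ≠ 0) (m : ℕ) (hm : lam - (m : ℝ) + 1 ≠ 0) :
    αseq ((lam - 1) / lam) m = (lam - m) / (lam - m + 1) := by
  unfold αseq
  have e1 : (lam - 1) / lam - 1 = -(1 / lam) := by field_simp; ring
  rw [e1]
  rw [div_eq_div_iff (by field_simp; intro h; exact absurd (by field_simp at h; linarith) hm) hm]
  field_simp
  ring

lemma beta_eval {n : ℕ} (h0 : lam - (n : ℝ) + 1 ≠ 0) (m : ℕ)
    (hm : lam - (n : ℝ) + (m : ℝ) ≠ 0) :
    βseq (-((lam - (n : ℝ) + 2) / (lam - (n : ℝ) + 1))) m =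
      -((lam - (n : ℝ) + 1 + (m : ℝ)) / (lam - (n : ℝ) + (m : ℝ))) := by
  unfold βseq
  have e1 : -((lam - (n : ℝ) + 2) / (lam - (n : ℝ) + 1)) + 1 =
      -(1 / (lam - (n : ℝ) + 1)) := by field_simp; ring
  rw [e1]
  rw [show -((lam - (n : ℝ) + 1 + (m : ℝ)) / (lam - (n : ℝ) + (m : ℝ))) =
      (-(lam - (n : ℝ) + 1 + (m : ℝ))) / (lam - (n : ℝ) + (m : ℝ)) from by ring]
  rw [div_eq_div_iff (by field_simp; intro h; exact absurd (by field_simp at h; linarith) hm) hm]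
  field_simp
  ring

lemma gamma_eval {n : ℕ} (h0 : lam ≠ 0) (hmu : lam - (n : ℝ) + 1 ≠ 0) (i : ℕ) :
    γseq n ((lam - 1) / lam) (-((lam - (n : ℝ) + 2) / (lam - (n : ℝ) + 1))) i =
      lam - (i : ℝ) + 1 := by
  unfold γseq
  have e1 : (lam - 1) / lam - 1 = -(1 / lam) := by field_simp; ring
  have e2 : -((lam - (n : ℝ) + 2) / (lam - (n : ℝ) + 1)) + 1 =
      -(1 / (lam - (n : ℝ) + 1)) := by field_simp; ring
  have e3 : -((lam - (n : ℝ) + 2) / (lam - (n : ℝ) + 1)) =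
      -(1 / (lam - (n : ℝ) + 1)) - 1 := by rw [← e2]; ring
  rw [e1, e3]
  have hden : (n : ℝ) * -(1 / lam) * (-(1 / (lam - (n : ℝ) + 1)) - 1 + 1)
      - -(1 / lam) + (-(1 / (lam - (n : ℝ) + 1)) - 1) + 1 =
      1 / (lam * (lam - (n : ℝ) + 1)) := by
    field_simp
    ring
  rw [hden, div_eq_iff (one_div_ne_zero (mul_ne_zero h0 hmu))]
  field_simp
  ring

end Eval


lemma shift_sum (n : ℕ) (c : ℕ → ℝ) :
    (∑ m ∈ Finset.range n, if m + 1 < n then c (m + 1) else 0)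
      = ∑ i ∈ Finset.range n, if 1 ≤ i then c i else 0 := by
  rw [← Finset.sum_filter, ← Finset.sum_filter]
  have h1 : (Finset.range n).filter (fun m => m + 1 < n) = Finset.range (n - 1) := by
    ext m; simp only [Finset.mem_filter, Finset.mem_range]; omega
  have h2 : (Finset.range n).filter (fun i => 1 ≤ i) = Finset.Ico 1 n := by
    ext m; simp only [Finset.mem_filter, Finset.mem_range, Finset.mem_Ico]; omega
  rw [h1, h2, Finset.sum_Ico_eq_sum_range]
  exact Finset.sum_congr rfl fun i _ => by rw [add_comm]

lemma zcase {n : ℕ} (lam : ℝ) (h0 : lam ≠ 0) (hmu : lam - (n : ℝ) + 1 ≠ 0)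
    (x y : V n) :
    (∑ m : Fin n, (lam - ((m : ℕ) : ℝ)) *
        ((if 1 ≤ (m : ℕ) then Ec n y (m : ℕ) * Fc n x (n - (m : ℕ)) else 0) +
         (if (m : ℕ) + 1 < n then Fc n y (n - 1 - (m : ℕ)) * Ec n x ((m : ℕ) + 1) else 0)))
      = ∑ i : Fin n, (if 1 ≤ (i : ℕ) then
          γseq n ((lam - 1) / lam) (-((lam - (n : ℝ) + 2) / (lam - (n : ℝ) + 1))) (i : ℕ)
              * (Ec n x (i : ℕ) * Fc n y (n - (i : ℕ)))
            + (γseq n ((lam - 1) / lam) (-((lam - (n : ℝ) + 2) / (lam - (n : ℝ) + 1))) (i : ℕ) - 1)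
              * (Fc n x (n - (i : ℕ)) * Ec n y (i : ℕ))
          else 0) := by
  have hg : ∀ i : ℕ,
      γseq n ((lam - 1) / lam) (-((lam - (n : ℝ) + 2) / (lam - (n : ℝ) + 1))) i
        = lam - (i : ℝ) + 1 := gamma_eval lam h0 hmu
  rw [Fin.sum_univ_eq_sum_range (fun m => (lam - (m : ℝ)) *
        ((if 1 ≤ m then Ec n y m * Fc n x (n - m) else 0) +
         (if m + 1 < n then Fc n y (n - 1 - m) * Ec n x (m + 1) else 0))) n,
    Fin.sum_univ_eq_sum_range (fun i => if 1 ≤ i then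
          γseq n ((lam - 1) / lam) (-((lam - (n : ℝ) + 2) / (lam - (n : ℝ) + 1))) i
              * (Ec n x i * Fc n y (n - i))
            + (γseq n ((lam - 1) / lam) (-((lam - (n : ℝ) + 2) / (lam - (n : ℝ) + 1))) i - 1)
              * (Fc n x (n - i) * Ec n y i)
          else 0) n]
  simp only [mul_add]
  rw [Finset.sum_add_distrib]
  have hrhs : (∑ i ∈ Finset.range n, if 1 ≤ i then
          γseq n ((lam - 1) / lam) (-((lam - (n : ℝ) + 2) / (lam - (n : ℝ) + 1))) i
              * (Ec n x i * Fc n y (n - i))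
            + (γseq n ((lam - 1) / lam) (-((lam - (n : ℝ) + 2) / (lam - (n : ℝ) + 1))) i - 1)
              * (Fc n x (n - i) * Ec n y i)
          else 0)
      = (∑ i ∈ Finset.range n, if 1 ≤ i then
          γseq n ((lam - 1) / lam) (-((lam - (n : ℝ) + 2) / (lam - (n : ℝ) + 1))) i
              * (Ec n x i * Fc n y (n - i)) else 0)
        + (∑ i ∈ Finset.range n, if 1 ≤ i then
          (γseq n ((lam - 1) / lam) (-((lam - (n : ℝ) + 2) / (lam - (n : ℝ) + 1))) i - 1)
              * (Fc n x (n - i) * Ec n y i) else 0) := by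
    rw [← Finset.sum_add_distrib]
    refine Finset.sum_congr rfl fun i _ => ?_
    split_ifs <;> ring
  rw [hrhs, add_comm]
  congr 1
  · rw [← shift_sum n (fun i =>
      γseq n ((lam - 1) / lam) (-((lam - (n : ℝ) + 2) / (lam - (n : ℝ) + 1))) i
        * (Ec n x i * Fc n y (n - i)))]
    refine Finset.sum_congr rfl fun m hm => ?_
    split_ifs with h
    · rw [hg, show n - 1 - m = n - (m + 1) from by omega]
      push_cast
      ring
    · ring
  · refine Finset.sum_congr rfl fun m hm => ?_
    split_ifs with h
    · rw [hg]; ring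
    · ring

/-- the left-symmetric structure induced by `ω_λ` (characterized by
`ω_λ(x ∆ y, w) = -ω_λ(y, [x, w])`) coincides with `∆_{(α,β)}` for
`α = (λ-1)/λ` and `β = -(λ-n+2)/(λ-n+1)`. -/
theorem stmt15 (n : ℕ) (hn : 2 ≤ n) (lam : ℝ) (hlam : ∀ m : ℤ, lam ≠ (m : ℝ))
    (D : V n → V n → V n)
    (hD : ∀ x y w : V n, omegaForm n lam (D x y) w = -omegaForm n lam y (bracket n x w)) :
    D = lsa n ((lam - 1) / lam) (-((lam - (n : ℝ) + 2) / (lam - (n : ℝ) + 1))) := by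
  have hint : ∀ m : ℤ, lam - (m : ℝ) ≠ 0 := fun m h => hlam m (by linarith)
  have h0 : lam ≠ 0 := by have := hint 0; simpa using this
  have hmu : lam - (n : ℝ) + 1 ≠ 0 := by
    have := hint ((n : ℤ) - 1)
    push_cast at this
    intro h; apply this; linarith
  funext x y b
  cases b with
  | t =>
    have h := hD x y (bas n Bas.z)
    rw [omega_bas_z, omega_br_basz, neg_zero] at h
    exact h
  | z =>
    have h := hD x y (bas n Bas.t)
    rw [omega_bas_t, omega_br_bast, neg_inj] at h
    show D x y Bas.z = ∑ i : Fin n, ∑ j : Fin n,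
      (if (i : ℕ) + (j : ℕ) = n then
        γseq n ((lam - 1) / lam) (-((lam - (n : ℝ) + 2) / (lam - (n : ℝ) + 1))) (i : ℕ)
            * (x (Bas.e i) * y (Bas.f j))
          + (γseq n ((lam - 1) / lam) (-((lam - (n : ℝ) + 2) / (lam - (n : ℝ) + 1))) (i : ℕ) - 1)
            * (x (Bas.f j) * y (Bas.e i))
      else 0)
    rw [h, sum_pair, zcase lam h0 hmu x y]
    refine Finset.sum_congr rfl fun i _ => ?_
    by_cases h1 : 1 ≤ (i : ℕ)
    · rw [if_pos h1, dif_pos h1]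
      simp only [← Ec_eq, ← Fc_eq, Fin.val_mk]
    · rw [if_neg h1, dif_neg h1]
  | e k =>
    have hk := k.isLt
    have h := hD x y (bas n (Bas.f ⟨n - 1 - (k : ℕ), by omega⟩))
    rw [omega_bas_f, omega_br_basf] at h
    simp only [Fin.val_mk] at h
    rw [show n - 1 - (n - 1 - (k : ℕ)) = (k : ℕ) from by omega,
        show n - (n - 1 - (k : ℕ)) = (k : ℕ) + 1 from by omega] at h
    show D x y (Bas.e k) = if hlt : (k : ℕ) + 1 < n then
        αseq ((lam - 1) / lam) ((k : ℕ) + 1) * (x Bas.t * y (Bas.e ⟨(k : ℕ) + 1, hlt⟩))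
          + (αseq ((lam - 1) / lam) ((k : ℕ) + 1) - 1) * (x (Bas.e ⟨(k : ℕ) + 1, hlt⟩) * y Bas.t)
      else 0
    have hlk : lam - ((k : ℕ) : ℝ) ≠ 0 := by
      have := hint ((k : ℕ) : ℤ); push_cast at this; exact this
    apply mul_left_cancel₀ hlk
    rw [← Ec_eq (D x y) k, h]
    by_cases h2 : (k : ℕ) + 1 < n
    · rw [if_pos (show 1 ≤ n - 1 - (k : ℕ) by omega), dif_pos h2]
      have hda : lam - (((k : ℕ) : ℝ) + 1) + 1 ≠ 0 := by
        intro hcc; apply hlk; linarith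
      rw [alpha_eval lam h0 ((k : ℕ) + 1) (by push_cast; exact hda)]
      simp only [← Ec_eq, Fin.val_mk]
      push_cast
      field_simp
      ring
    · rw [if_neg (show ¬ (1 ≤ n - 1 - (k : ℕ)) by omega), dif_neg h2]
      ring
  | f k =>
    have hk := k.isLt
    have h := hD x y (bas n (Bas.e ⟨n - 1 - (k : ℕ), by omega⟩))
    rw [omega_bas_e, omega_br_base, neg_inj] at h
    simp only [Fin.val_mk] at h
    rw [show n - 1 - (n - 1 - (k : ℕ)) = (k : ℕ) from by omega,
        show n - (n - 1 - (k : ℕ)) = (k : ℕ) + 1 from by omega,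
        show n - 1 - (k : ℕ) - 1 = n - 2 - (k : ℕ) from by omega,
        show ((n - 1 - (k : ℕ) : ℕ) : ℝ) = (n : ℝ) - 1 - ((k : ℕ) : ℝ) from by
          rw [Nat.cast_sub (by omega), Nat.cast_sub (by omega)]; push_cast; ring] at h
    show D x y (Bas.f k) = if hlt : (k : ℕ) + 1 < n then
        βseq (-((lam - (n : ℝ) + 2) / (lam - (n : ℝ) + 1))) ((k : ℕ) + 1)
            * (x Bas.t * y (Bas.f ⟨(k : ℕ) + 1, hlt⟩))
          + (βseq (-((lam - (n : ℝ) + 2) / (lam - (n : ℝ) + 1))) ((k : ℕ) + 1) + 1)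
            * (x (Bas.f ⟨(k : ℕ) + 1, hlt⟩) * y Bas.t)
      else 0
    have hlf : lam - ((n : ℝ) - 1 - ((k : ℕ) : ℝ)) ≠ 0 := by
      have := hint ((n : ℤ) - 1 - ((k : ℕ) : ℤ))
      push_cast at this
      intro hcc; apply this; linarith
    apply mul_left_cancel₀ hlf
    rw [← Fc_eq (D x y) k, h]
    by_cases h2 : (k : ℕ) + 1 < n
    · rw [if_pos (show 1 ≤ n - 1 - (k : ℕ) by omega), dif_pos h2]
      have hdb : lam - (n : ℝ) + (((k : ℕ) : ℝ) + 1) ≠ 0 := by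
        have := hint ((n : ℤ) - 1 - ((k : ℕ) : ℤ))
        push_cast at this
        intro hcc; apply this; linarith
      rw [beta_eval lam hmu ((k : ℕ) + 1) (by push_cast; exact hdb),
        show ((n - 2 - (k : ℕ) : ℕ) : ℝ) = (n : ℝ) - 2 - ((k : ℕ) : ℝ) from by
          rw [Nat.cast_sub (by omega), Nat.cast_sub (by omega)]; push_cast; ring]
      simp only [← Fc_eq, Fin.val_mk]
      push_cast
      field_simp
      ring
    · rw [if_neg (show ¬ (1 ≤ n - 1 - (k : ℕ)) by omega), dif_neg h2]
      ring

end Paper
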